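/- With probability at least 1 − 1/n^{31}, every j ∈ {1, …, η} satisfies Δ(G_j) ≤ Δ' + 10·√(Δ'·ln n), where Δ(G_j) denotes the maximum degree of G_j. -/

import Mathlib

open MeasureTheory ProbabilityTheory

set_option maxHeartbeats 1000000 in
/-- Let `G` be a finite simple graph on `n ≥ 3` vertices with maximum degree at most `Δ`,
`100·ln n ≤ Δ' ≤ Δ ≤ n`, `η := ⌈Δ/Δ'⌉`, and let `(J_e)_{e ∈ E}` be independent random
variables, each uniform on `{1, …, η}`; `G_j` is the spanning subgraph of `G` with edge set
`{e ∈ E : J_e = j}`. Then with probability at least `1 − 1/n^{31}`, every `j ∈ {1, …, η}`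
satisfies `Δ(G_j) ≤ Δ' + 10·√(Δ'·ln n)`. -/
theorem stmt_12 {V : Type*} [Fintype V] [DecidableEq V]
    (G : SimpleGraph V) [DecidableRel G.Adj]
    {Ω : Type*} [MeasurableSpace Ω] (μ : Measure Ω) [IsProbabilityMeasure μ]
    (Δ Δ' : ℝ) (n : ℕ) (hn : n = Fintype.card V) (hn3 : 3 ≤ n)
    (hdeg : ∀ u : V, (G.degree u : ℝ) ≤ Δ)
    (hΔ'1 : 100 * Real.log n ≤ Δ') (hΔ'2 : Δ' ≤ Δ) (hΔn : Δ ≤ (n : ℝ))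
    (η : ℕ) (hη : η = ⌈Δ / Δ'⌉₊)
    (J : Sym2 V → Ω → ℕ)
    (hmeas : ∀ e, Measurable (J e))
    (hindep : iIndepFun
      (fun e : G.edgeSet => J e) μ)
    (hdist : ∀ e ∈ G.edgeSet, ∀ j ∈ Finset.Icc 1 η,
      μ {ω | J e ω = j} = (η : ENNReal)⁻¹) :
    ENNReal.ofReal (1 - 1 / (n : ℝ) ^ 31) ≤
      μ {ω | ∀ j ∈ Finset.Icc 1 η, ∀ u : V,
        (({e | e ∈ G.incidenceSet u ∧ J e ω = j}.ncard : ℝ)) ≤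
          Δ' + 10 * Real.sqrt (Δ' * Real.log n)} := by
  classical
  have hn0 : 0 < n := by omega
  have hnR1 : (1:ℝ) < (n:ℝ) := by exact_mod_cast (by omega : 1 < n)
  have hnRpos : (0:ℝ) < (n:ℝ) := by positivity
  set L := Real.log n with hLdef
  have hLpos : 0 < L := Real.log_pos hnR1
  have hL1 : 1 ≤ L := by
    rw [hLdef, Real.le_log_iff_exp_le hnRpos]
    have h3 : (3:ℝ) ≤ (n:ℝ) := by exact_mod_cast hn3
    nlinarith [Real.exp_one_lt_d9]
  have hΔ'pos : 0 < Δ' := lt_of_lt_of_le (by positivity) hΔ'1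
  have hΔ'100 : 100 ≤ Δ' := by nlinarith
  set s := 10 * Real.sqrt (Δ' * L) with hsdef
  have hs2 : s ^ 2 = 100 * (Δ' * L) := by
    rw [hsdef, mul_pow, Real.sq_sqrt (by positivity)]; norm_num
  have hspos : 0 < s := by rw [hsdef]; positivity
  have hsle : s ≤ Δ' := by nlinarith
  -- constants for Chernoff
  set t := 3/5 * s / Δ' with htdef
  have htpos : 0 < t := by positivity
  have htΔ : t * Δ' = 3/5 * s := by rw [htdef, div_mul_cancel₀ _ hΔ'pos.ne']
  have htle : t ≤ 3/5 := by
    rw [htdef, div_le_iff₀ hΔ'pos]; nlinarith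
  have hexp : Real.exp t ≤ 1 + t + 3/4 * t^2 := by
    have h := Real.exp_bound' htpos.le (le_trans htle (by norm_num)) (n := 3) (by norm_num)
    simp only [Finset.sum_range_succ, Finset.sum_range_zero, Nat.factorial] at h
    norm_num at h
    have h3 : t * t^2 ≤ 3/5 * t^2 := mul_le_mul_of_nonneg_right htle (sq_nonneg t)
    nlinarith [h, h3, sq_nonneg t]
  -- numeric core
  have hnum : Δ' * (Real.exp t - 1) - t * (Δ' + s) ≤ -(33 * L) := by
    have hmul : Δ'^2 * Real.exp t ≤ Δ'^2 * (1 + t + 3/4 * t^2) :=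
      mul_le_mul_of_nonneg_left hexp (sq_nonneg Δ')
    have hgoal : (Δ' * (Real.exp t - 1) - t * (Δ' + s)) * Δ' ≤ (-(33 * L)) * Δ' := by
      nlinarith [hmul, htΔ, hs2]
    exact le_of_mul_le_mul_right hgoal hΔ'pos
  -- eta facts
  have hηpos : 0 < η := by
    rw [hη, Nat.ceil_pos]
    exact div_pos (lt_of_lt_of_le hΔ'pos hΔ'2) hΔ'pos
  have hηRpos : (0:ℝ) < (η:ℝ) := by exact_mod_cast hηpos
  have hηΔ : Δ ≤ (η:ℝ) * Δ' := by
    have h := Nat.le_ceil (Δ / Δ')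
    rw [← hη] at h
    calc Δ = Δ / Δ' * Δ' := by field_simp
    _ ≤ (η:ℝ) * Δ' := by
        exact mul_le_mul_of_nonneg_right h hΔ'pos.le
  have hηn : (η:ℝ) ≤ (n:ℝ) := by
    have : η ≤ n := by
      rw [hη, Nat.ceil_le, div_le_iff₀ hΔ'pos]
      calc Δ ≤ (n:ℝ) * 1 := by linarith [hΔn]
      _ ≤ (n:ℝ) * Δ' := mul_le_mul_of_nonneg_left (by linarith [hΔ'100]) hnRpos.le
    exact_mod_cast this
  -- per-pair tail bound
  have key : ∀ j ∈ Finset.Icc 1 η, ∀ u : V,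
      μ {ω | Δ' + s ≤ (({e | e ∈ G.incidenceSet u ∧ J e ω = j}.ncard : ℝ))} ≤
        ENNReal.ofReal (1/(n:ℝ)^33) := by
    intro j hj u
    set S : Finset G.edgeSet := Finset.univ.filter (fun e : G.edgeSet => u ∈ (e : Sym2 V)) with hSdef
    set X : G.edgeSet → Ω → ℝ := fun e ω => if J (e : Sym2 V) ω = j then 1 else 0 with hXdef
    have hXmeas : ∀ e : G.edgeSet, Measurable (X e) := by
      intro e
      have h1 : MeasurableSet {ω | J (e:Sym2 V) ω = j} :=
        hmeas (e:Sym2 V) (measurableSet_singleton j)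
      exact Measurable.ite h1 measurable_const measurable_const
    have hcount : ∀ ω, (({e | e ∈ G.incidenceSet u ∧ J e ω = j}.ncard : ℝ))
        = (∑ e ∈ S, X e) ω := by
      intro ω
      have hset : {e | e ∈ G.incidenceSet u ∧ J e ω = j}
          = ↑((S.filter (fun e : G.edgeSet => J (e : Sym2 V) ω = j)).image (fun e : G.edgeSet => (e : Sym2 V))) := by
        ext e
        simp only [Set.mem_setOf_eq, Finset.coe_image, Set.mem_image, Finset.mem_coe,
          Finset.mem_filter, hSdef, Finset.mem_univ, true_and,
          SimpleGraph.incidenceSet, Set.mem_sep_iff]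
        constructor
        · rintro ⟨⟨he, hue⟩, hJ⟩
          exact ⟨⟨e, he⟩, ⟨hue, hJ⟩, rfl⟩
        · rintro ⟨x, ⟨hue, hJ⟩, rfl⟩
          exact ⟨⟨x.2, hue⟩, hJ⟩
      have himg2 : ((S.filter (fun e : G.edgeSet => J (e : Sym2 V) ω = j)).image (fun e : G.edgeSet => (e : Sym2 V))).card
          = (S.filter (fun e : G.edgeSet => J (e : Sym2 V) ω = j)).card :=
        Finset.card_image_of_injective _ Subtype.val_injective
      rw [hset, Set.ncard_coe_finset, himg2, Finset.sum_apply]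
      simp only [hXdef, Finset.sum_boole]
    have hScard : (S.card : ℝ) ≤ Δ := by
      have himg : S.image (fun e : G.edgeSet => (e : Sym2 V)) = G.incidenceFinset u := by
        ext e
        simp only [Finset.mem_image, SimpleGraph.mem_incidenceFinset, hSdef, Finset.mem_filter,
          Finset.mem_univ, true_and, SimpleGraph.incidenceSet, Set.mem_sep_iff]
        constructor
        · rintro ⟨⟨e', he'⟩, hue, rfl⟩
          exact ⟨he', hue⟩
        · rintro ⟨he, hue⟩
          exact ⟨⟨e, he⟩, hue, rfl⟩
      have hci : (S.image (fun e : G.edgeSet => (e : Sym2 V))).card = S.card :=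
        Finset.card_image_of_injective _ Subtype.val_injective
      have : S.card = G.degree u := by
        rw [← SimpleGraph.card_incidenceFinset_eq_degree, ← himg, hci]
      rw [this]; exact hdeg u
    -- independence of the indicators
    have hXindep : iIndepFun X μ := by
      have hg : Measurable (fun k : ℕ => if k = j then (1:ℝ) else 0) := measurable_from_top
      exact hindep.comp (fun _ k => if k = j then (1:ℝ) else 0) (fun _ => hg)
    -- rewrite exp (t * X e ·) as indicator + 1
    have hfun : ∀ e : G.edgeSet, (fun ω => Real.exp (t * X e ω))
        = fun ω => Set.indicator {ω | J (e:Sym2 V) ω = j} (fun _ => Real.exp t - 1) ω + 1 := by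
      intro e
      funext ω
      by_cases h : J (e:Sym2 V) ω = j
      · have hm : ω ∈ {ω | J (e:Sym2 V) ω = j} := h
        rw [Set.indicator_of_mem hm]
        simp [hXdef, h]
      · have hm : ω ∉ {ω | J (e:Sym2 V) ω = j} := h
        rw [Set.indicator_of_notMem hm]
        simp [hXdef, h]
    have hAmeas : ∀ e : G.edgeSet, MeasurableSet {ω | J (e:Sym2 V) ω = j} :=
      fun e => hmeas (e:Sym2 V) (measurableSet_singleton j)
    have hint_e : ∀ e ∈ S, Integrable (fun ω => Real.exp (t * X e ω)) μ := by
      intro e _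
      rw [hfun e]
      exact ((integrable_const (Real.exp t - 1)).indicator (hAmeas e)).add (integrable_const 1)
    have hmgf_e : ∀ e ∈ S, mgf (X e) μ t = 1 + (η:ℝ)⁻¹ * (Real.exp t - 1) := by
      intro e _
      rw [mgf, hfun e, integral_add
        ((integrable_const (Real.exp t - 1)).indicator (hAmeas e)) (integrable_const 1),
        integral_indicator_const _ (hAmeas e), integral_const]
      rw [measureReal_def, hdist (e:Sym2 V) e.2 j hj]
      simp only [measureReal_def, ENNReal.toReal_inv, ENNReal.toReal_natCast, smul_eq_mul, measure_univ,
        ENNReal.toReal_one]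
      ring
    -- Chernoff
    have hint : Integrable (fun ω => Real.exp (t * (∑ e ∈ S, X e) ω)) μ :=
      hXindep.integrable_exp_mul_sum hXmeas hint_e
    have hcher := measure_ge_le_exp_mul_mgf (X := ∑ e ∈ S, X e) (μ := μ) (Δ' + s) htpos.le hint
    have hmgfsum : mgf (∑ e ∈ S, X e) μ t = ∏ e ∈ S, mgf (X e) μ t :=
      hXindep.mgf_sum hXmeas S
    have hexpt1 : 0 ≤ Real.exp t - 1 := by
      have := Real.one_le_exp htpos.le
      linarith
    have hprod : ∏ e ∈ S, mgf (X e) μ t ≤ Real.exp (Δ' * (Real.exp t - 1)) := by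
      calc ∏ e ∈ S, mgf (X e) μ t
          ≤ ∏ _e ∈ S, Real.exp ((η:ℝ)⁻¹ * (Real.exp t - 1)) := by
            apply Finset.prod_le_prod
            · intro e he; exact mgf_nonneg
            · intro e he
              rw [hmgf_e e he]
              have := Real.add_one_le_exp ((η:ℝ)⁻¹ * (Real.exp t - 1))
              linarith
      _ = Real.exp ((S.card : ℝ) * ((η:ℝ)⁻¹ * (Real.exp t - 1))) := by
            rw [Finset.prod_const, ← Real.exp_nat_mul]
      _ ≤ Real.exp (Δ' * (Real.exp t - 1)) := by
            apply Real.exp_le_exp.mpr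
            have h1 : (S.card : ℝ) * (η:ℝ)⁻¹ ≤ Δ' := by
              calc (S.card : ℝ) * (η:ℝ)⁻¹ ≤ Δ * (η:ℝ)⁻¹ :=
                mul_le_mul_of_nonneg_right hScard (by positivity)
              _ = Δ / η := by ring
              _ ≤ Δ' := by
                  rw [div_le_iff₀ hηRpos, mul_comm]; exact hηΔ
            calc (S.card : ℝ) * ((η:ℝ)⁻¹ * (Real.exp t - 1))
                = ((S.card : ℝ) * (η:ℝ)⁻¹) * (Real.exp t - 1) := by ring
            _ ≤ Δ' * (Real.exp t - 1) := mul_le_mul_of_nonneg_right h1 hexpt1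
    have hreal : (μ {ω | Δ' + s ≤ (∑ e ∈ S, X e) ω}).toReal ≤ 1/(n:ℝ)^33 := by
      calc (μ {ω | Δ' + s ≤ (∑ e ∈ S, X e) ω}).toReal
          ≤ Real.exp (-t * (Δ' + s)) * mgf (∑ e ∈ S, X e) μ t := hcher
      _ ≤ Real.exp (-t * (Δ' + s)) * Real.exp (Δ' * (Real.exp t - 1)) := by
            apply mul_le_mul_of_nonneg_left _ (Real.exp_nonneg _)
            rw [hmgfsum]; exact hprod
      _ = Real.exp (Δ' * (Real.exp t - 1) - t * (Δ' + s)) := by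
            rw [← Real.exp_add]; congr 1; ring
      _ ≤ Real.exp (-(33 * L)) := Real.exp_le_exp.mpr hnum
      _ = 1/(n:ℝ)^33 := by
            have h33 : (33:ℝ) * L = Real.log ((n:ℝ)^(33:ℕ)) := by
              rw [Real.log_pow, hLdef]; norm_num
            rw [Real.exp_neg, h33, Real.exp_log (by positivity)]
            norm_num
    have hsets : {ω | Δ' + s ≤ (({e | e ∈ G.incidenceSet u ∧ J e ω = j}.ncard : ℝ))}
        = {ω | Δ' + s ≤ (∑ e ∈ S, X e) ω} := by
      ext ω; simp only [Set.mem_setOf_eq, hcount ω]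
    rw [hsets]
    rw [← ENNReal.ofReal_toReal (measure_ne_top μ _)]
    exact ENNReal.ofReal_le_ofReal hreal
  -- union bound
  set A := {ω | ∀ j ∈ Finset.Icc 1 η, ∀ u : V,
      (({e | e ∈ G.incidenceSet u ∧ J e ω = j}.ncard : ℝ)) ≤ Δ' + s} with hAdef
  have hAc : Aᶜ ⊆ ⋃ j ∈ Finset.Icc 1 η, ⋃ u : V,
      {ω | Δ' + s ≤ (({e | e ∈ G.incidenceSet u ∧ J e ω = j}.ncard : ℝ))} := by
    intro ω hω
    simp only [hAdef, Set.mem_compl_iff, Set.mem_setOf_eq, not_forall, not_le] at hω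
    obtain ⟨j, hj, u, hu⟩ := hω
    refine Set.mem_biUnion hj ?_
    exact Set.mem_iUnion.mpr ⟨u, le_of_lt hu⟩
  have hmuAc : μ Aᶜ ≤ ENNReal.ofReal (1/(n:ℝ)^31) := by
    calc μ Aᶜ ≤ μ (⋃ j ∈ Finset.Icc 1 η, ⋃ u : V,
        {ω | Δ' + s ≤ (({e | e ∈ G.incidenceSet u ∧ J e ω = j}.ncard : ℝ))}) :=
          measure_mono hAc
    _ ≤ ∑ j ∈ Finset.Icc 1 η, μ (⋃ u : V,
        {ω | Δ' + s ≤ (({e | e ∈ G.incidenceSet u ∧ J e ω = j}.ncard : ℝ))}) :=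
          measure_biUnion_finset_le _ _
    _ ≤ ∑ j ∈ Finset.Icc 1 η, ∑ u : V, ENNReal.ofReal (1/(n:ℝ)^33) := by
        apply Finset.sum_le_sum
        intro j hj
        refine le_trans (measure_iUnion_fintype_le μ _) ?_
        apply Finset.sum_le_sum
        intro u _
        exact key j hj u
    _ = (η : ENNReal) * ((n : ENNReal) * ENNReal.ofReal (1/(n:ℝ)^33)) := by
        rw [Finset.sum_const, Finset.sum_const, Finset.card_univ, Nat.card_Icc, ← hn]
        simp [nsmul_eq_mul, mul_assoc]
    _ ≤ ENNReal.ofReal (1/(n:ℝ)^31) := by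
        rw [← ENNReal.ofReal_natCast η, ← ENNReal.ofReal_natCast n,
          ← ENNReal.ofReal_mul (by positivity), ← ENNReal.ofReal_mul (by positivity)]
        apply ENNReal.ofReal_le_ofReal
        have h1 : (η:ℝ) * ((n:ℝ) * (1/(n:ℝ)^33)) ≤ (n:ℝ) * ((n:ℝ) * (1/(n:ℝ)^33)) :=
          mul_le_mul_of_nonneg_right hηn (by positivity)
        have h2 : (n:ℝ) * ((n:ℝ) * (1/(n:ℝ)^33)) = 1/(n:ℝ)^31 := by
          field_simp
        linarith
  have hone : (1:ENNReal) ≤ μ A + μ Aᶜ := by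
    have h := measure_union_le (μ := μ) A Aᶜ
    rwa [Set.union_compl_self, measure_univ] at h
  calc ENNReal.ofReal (1 - 1/(n:ℝ)^31)
      = ENNReal.ofReal 1 - ENNReal.ofReal (1/(n:ℝ)^31) := ENNReal.ofReal_sub 1 (by positivity)
  _ = 1 - ENNReal.ofReal (1/(n:ℝ)^31) := by rw [ENNReal.ofReal_one]
  _ ≤ 1 - μ Aᶜ := tsub_le_tsub_left hmuAc 1
  _ ≤ μ A := by
      rw [tsub_le_iff_right]
      exact hone
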